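/- For all integers n > m ≥ 1, 3^{n−m}·ln pc(m) + 3·(3^{n−m}−1)·ln 2 < ln pc(n) < ln pd(n) < 3^{n−m}·ln pd(m) + 3·(3^{n−m}−1)·ln 2 (natural logarithms of the positive integers pc(m), pd(m), pc(n), pd(n)). -/

import Mathlib

/-- One step of the recursion for the ice-model boundary counts
`(pa, pb, pc, pd)` on the Sierpinski gasket `SG(n)`. -/
def iceStep : ℕ × ℕ × ℕ × ℕ → ℕ × ℕ × ℕ × ℕ
  | (a, b, c, d) =>
    ((a + b) ^ 2 * (a + 3 * c + d),
     (a + b) ^ 2 * (b + 3 * c + d),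
     a ^ 2 * b + b ^ 2 * a + (3 * c + d) ^ 3,
     a ^ 3 + b ^ 3 + (3 * c + d) ^ 3)

/-- The quadruple `(pa(n), pb(n), pc(n), pd(n))`. -/
def iceSeq : ℕ → ℕ × ℕ × ℕ × ℕ
  | 0 => (0, 1, 0, 1)
  | n + 1 => iceStep (iceSeq n)

def pa (n : ℕ) : ℕ := (iceSeq n).1
def pb (n : ℕ) : ℕ := (iceSeq n).2.1
def pc (n : ℕ) : ℕ := (iceSeq n).2.2.1
def pd (n : ℕ) : ℕ := (iceSeq n).2.2.2

lemma pa_succ (n : ℕ) : pa (n+1) = (pa n + pb n)^2 * (pa n + 3*pc n + pd n) := rfl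
lemma pb_succ (n : ℕ) : pb (n+1) = (pa n + pb n)^2 * (pb n + 3*pc n + pd n) := rfl
lemma pc_succ (n : ℕ) : pc (n+1) = pa n^2 * pb n + pb n^2 * pa n + (3*pc n + pd n)^3 := rfl
lemma pd_succ (n : ℕ) : pd (n+1) = pa n^3 + pb n^3 + (3*pc n + pd n)^3 := rfl

lemma pa_lt_pb : ∀ n, pa n < pb n := by
  intro n
  induction n with
  | zero => norm_num [pa, pb, iceSeq]
  | succ k ih =>
    rw [pa_succ, pb_succ]
    have h0 : 0 < pa k + pb k := by omega
    have h1 : 0 < (pa k + pb k)^2 := pow_pos h0 2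
    exact Nat.mul_lt_mul_of_le_of_lt (le_refl _) (by omega) h1

lemma pb_pos (n : ℕ) : 1 ≤ pb n := by have := pa_lt_pb n; omega

lemma pd_pos : ∀ n, 1 ≤ pd n := by
  intro n
  induction n with
  | zero => norm_num [pd, iceSeq]
  | succ k ih =>
    rw [pd_succ]
    have := pb_pos k
    have : 1 ≤ pb k ^ 3 := Nat.one_le_pow _ _ (by omega)
    omega

lemma pa_pos (n : ℕ) : 1 ≤ pa (n+1) := by
  rw [pa_succ]
  have h1 := pb_pos n
  have h2 := pd_pos n
  have : 1 ≤ (pa n + pb n)^2 := Nat.one_le_pow _ _ (by omega)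
  exact Nat.one_le_iff_ne_zero.2 (by positivity)

lemma pc_pos (n : ℕ) : 1 ≤ pc (n+1) := by
  rw [pc_succ]
  have h2 := pd_pos n
  have : 1 ≤ (3*pc n + pd n)^3 := Nat.one_le_pow _ _ (by omega)
  omega

lemma pc_le_pd : ∀ n, pc n ≤ pd n := by
  intro n
  induction n with
  | zero => norm_num [pc, pd, iceSeq]
  | succ k ih =>
    rw [pc_succ, pd_succ]
    have h := pa_lt_pb k
    obtain ⟨r, hr⟩ : ∃ r, pb k = pa k + (r+1) := ⟨pb k - pa k - 1, by omega⟩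
    rw [hr]
    nlinarith [sq_nonneg (pa k), sq_nonneg r]

lemma pc_lt_pd (n : ℕ) : pc (n+1) < pd (n+1) := by
  rw [pc_succ, pd_succ]
  have h := pa_lt_pb n
  obtain ⟨r, hr⟩ : ∃ r, pb n = pa n + (r+1) := ⟨pb n - pa n - 1, by omega⟩
  rw [hr]
  nlinarith [sq_nonneg (pa n), sq_nonneg r]

/-- `pd(n+1) = pc(n+1) + (a+b)(b-a)²` -/
lemma pd_eq_pc_add (n : ℕ) :
    pd (n+1) = pc (n+1) + (pa n + pb n) * (pb n - pa n)^2 := by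
  rw [pc_succ, pd_succ]
  have h := pa_lt_pb n
  obtain ⟨r, hr⟩ : ∃ r, pb n = pa n + r := ⟨pb n - pa n, by omega⟩
  have hsub : pb n - pa n = r := by omega
  rw [hsub, hr]; ring

def Sn (n : ℕ) : ℕ := pa n + pb n
def Tn (n : ℕ) : ℕ := 3 * pc n + pd n
def Rn (n : ℕ) : ℕ := pb n - pa n

lemma S_succ (n : ℕ) : Sn (n+1) = Sn n ^2 * (Sn n + 2 * Tn n) := by
  simp only [Sn, Tn, pa_succ, pb_succ]; ring

lemma T_succ (n : ℕ) : Tn (n+1) = Sn n ^3 + 4 * Tn n ^3 := by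
  simp only [Sn, Tn, pc_succ, pd_succ]; ring

lemma R_succ (n : ℕ) : Rn (n+1) = Sn n ^2 * Rn n := by
  simp only [Rn, Sn, pa_succ, pb_succ]
  have h := pa_lt_pb n
  obtain ⟨r, hr⟩ : ∃ r, pb n = pa n + r := ⟨pb n - pa n, by omega⟩
  have h1 : pa n + r - pa n = r := by omega
  rw [hr, h1]
  have h2 : (pa n + (pa n + r)) ^ 2 * (pa n + r + 3 * pc n + pd n)
      = (pa n + (pa n + r)) ^ 2 * (pa n + 3 * pc n + pd n)
        + (pa n + (pa n + r)) ^ 2 * r := by ring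
  rw [h2, Nat.add_sub_cancel_left]

lemma S_pos (n : ℕ) : 1 ≤ Sn n := by have := pb_pos n; simp [Sn]; omega
lemma T_pos (n : ℕ) : 1 ≤ Tn n := by have := pd_pos n; simp [Tn]; omega
lemma R_pos (n : ℕ) : 1 ≤ Rn n := by have := pa_lt_pb n; simp [Rn]; omega

lemma Sn2 : Sn 2 = 117 := rfl
lemma Tn2 : Tn 2 = 527 := rfl
lemma Rn2 : Rn 2 = 9 := rfl

/-- The key invariant, valid from level 2 on. -/
lemma inv : ∀ n, 4 * Sn (n+2) ≤ Tn (n+2) ∧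
    16 * Sn (n+2)^5 ≤ 81 * Rn (n+2)^2 * Tn (n+2)^3 := by
  intro n
  induction n with
  | zero => rw [Sn2, Tn2, Rn2]; norm_num
  | succ k ih =>
    obtain ⟨h4, h16⟩ := ih
    have eS : Sn (k+1+2) = Sn (k+2)^2 * (Sn (k+2) + 2 * Tn (k+2)) := S_succ (k+2)
    have eT : Tn (k+1+2) = Sn (k+2)^3 + 4 * Tn (k+2)^3 := T_succ (k+2)
    have eR : Rn (k+1+2) = Sn (k+2)^2 * Rn (k+2) := R_succ (k+2)
    rw [eS, eT, eR]
    set s := Sn (k+2) with hs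
    set t := Tn (k+2) with ht
    set r := Rn (k+2) with hr
    have hs1 : 1 ≤ s := S_pos _
    have ht1 : 1 ≤ t := T_pos _
    have hst : s ≤ t := by omega
    constructor
    · -- 4 * (s^2*(s+2t)) ≤ s^3 + 4*t^3
      have e1 : 64 * s^3 ≤ t^3 := by
        calc 64 * s^3 = (4*s)^3 := by ring
        _ ≤ t^3 := Nat.pow_le_pow_left h4 3
      have e2 : 16 * s^2 ≤ t^2 := by
        calc 16 * s^2 = (4*s)^2 := by ring
        _ ≤ t^2 := Nat.pow_le_pow_left h4 2
      have e3 : 16 * s^2 * t ≤ t^2 * t := Nat.mul_le_mul_right t e2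
      nlinarith [e1, e3]
    · -- 16 * (s^2*(s+2t))^5 ≤ 81 * (s^2*r)^2 * (s^3+4t^3)^3
      have key : 1024 * (16 * (s^2*(s+2*t))^5) ≤ 1024 * (81 * (s^2*r)^2 * (s^3+4*t^3)^3) := by
        have e1 : 1024 * (s+2*t)^5 ≤ 59049 * t^5 := by
          calc 1024 * (s+2*t)^5 = (4*(s+2*t))^5 := by ring
          _ ≤ (9*t)^5 := Nat.pow_le_pow_left (by omega) 5
          _ = 59049 * t^5 := by ring
        have e2 : 64 * (t^3)^3 ≤ (s^3 + 4*t^3)^3 := by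
          calc 64 * (t^3)^3 = (4*t^3)^3 := by ring
          _ ≤ (s^3+4*t^3)^3 := Nat.pow_le_pow_left (Nat.le_add_left _ _) 3
        calc 1024 * (16 * (s^2*(s+2*t))^5)
            = (16 * s^5) * (s^5 * (1024 * (s+2*t)^5)) := by ring
          _ ≤ (81 * r^2 * t^3) * (s^5 * (59049 * t^5)) :=
              Nat.mul_le_mul h16 (Nat.mul_le_mul_left _ e1)
          _ = 59049 * (s * (81 * r^2 * (s^4 * t^8))) := by ring
          _ ≤ 65536 * (t * (81 * r^2 * (s^4 * t^8))) :=
              Nat.mul_le_mul (by norm_num) (Nat.mul_le_mul_right _ hst)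
          _ = 1024 * (81 * (s^2*r)^2 * (64 * (t^3)^3)) := by ring
          _ ≤ 1024 * (81 * (s^2*r)^2 * (s^3+4*t^3)^3) :=
              Nat.mul_le_mul_left _ (Nat.mul_le_mul_left _ e2)
      exact Nat.le_of_mul_le_mul_left key (by norm_num)

/-- The main per-step estimate:  2·S(n+1)³ ≤ 9·S(n)·R(n)²·T(n+1)², for n ≥ 1. -/
lemma keyM : ∀ n, 1 ≤ n → 2 * Sn (n+1)^3 ≤ 9 * Sn n * Rn n^2 * Tn (n+1)^2 := by
  intro n hn
  match n, hn with
  | 1, _ =>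
    have h1 : Sn 1 = 3 := rfl
    have h2 : Rn 1 = 1 := rfl
    have h3 : Sn 2 = 117 := rfl
    have h4 : Tn 2 = 527 := rfl
    rw [h1, h2, h3, h4]; norm_num
  | (k+2), _ =>
    obtain ⟨h4, h16⟩ := inv k
    have eS : Sn (k+2+1) = Sn (k+2)^2 * (Sn (k+2) + 2 * Tn (k+2)) := S_succ (k+2)
    have eT : Tn (k+2+1) = Sn (k+2)^3 + 4 * Tn (k+2)^3 := T_succ (k+2)
    rw [eS, eT]
    set s := Sn (k+2) with hs
    set t := Tn (k+2) with ht
    set r := Rn (k+2) with hr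
    have hs1 : 1 ≤ s := S_pos _
    have ht1 : 1 ≤ t := T_pos _
    -- goal : 2 * (s^2*(s+2t))^3 ≤ 9 * s * r^2 * (s^3+4t^3)^2
    have key : 1024 * (2 * (s^2*(s+2*t))^3) ≤ 1024 * (9 * s * r^2 * (s^3+4*t^3)^2) := by
      have e1 : 64 * (s+2*t)^3 ≤ 729 * t^3 := by
        calc 64 * (s+2*t)^3 = (4*(s+2*t))^3 := by ring
        _ ≤ (9*t)^3 := Nat.pow_le_pow_left (by omega) 3
        _ = 729 * t^3 := by ring
      have e2 : 16 * (t^3)^2 ≤ (s^3 + 4*t^3)^2 := by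
        calc 16 * (t^3)^2 = (4*t^3)^2 := by ring
        _ ≤ (s^3+4*t^3)^2 := Nat.pow_le_pow_left (Nat.le_add_left _ _) 2
      calc 1024 * (2 * (s^2*(s+2*t))^3)
          = (16 * s^5) * (2 * s * (64 * (s+2*t)^3)) := by ring
        _ ≤ (81 * r^2 * t^3) * (2 * s * (729 * t^3)) :=
            Nat.mul_le_mul h16 (Nat.mul_le_mul_left _ e1)
        _ = 118098 * (s * r^2 * t^6) := by ring
        _ ≤ 147456 * (s * r^2 * t^6) := Nat.mul_le_mul_right _ (by norm_num)
        _ = 1024 * (9 * s * r^2 * (16 * (t^3)^2)) := by ring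
        _ ≤ 1024 * (9 * s * r^2 * (s^3+4*t^3)^2) :=
            Nat.mul_le_mul_left _ (Nat.mul_le_mul_left _ e2)
    exact Nat.le_of_mul_le_mul_left key (by norm_num)

/-- lower step bound for pc -/
lemma K1 : ∀ n, 1 ≤ n → 64 * pc n ^ 3 < pc (n+1) := by
  intro n hn
  match n, hn with
  | (j+1), _ =>
    rw [pc_succ (j+1)]
    have ha : 1 ≤ pa (j+1) := pa_pos j
    have hb : 1 ≤ pb (j+1) := pb_pos (j+1)
    have hcd : pc (j+1) ≤ pd (j+1) := pc_le_pd (j+1)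
    have h1 : 64 * pc (j+1) ^3 ≤ (3*pc (j+1) + pd (j+1))^3 := by
      calc 64 * pc (j+1)^3 = (4*pc (j+1))^3 := by ring
      _ ≤ (3*pc (j+1) + pd (j+1))^3 := Nat.pow_le_pow_left (by omega) 3
    have h2 : 1 ≤ pa (j+1)^2 * pb (j+1) :=
      Nat.one_le_iff_ne_zero.2 (by positivity)
    linarith [Nat.zero_le (pb (j+1)^2 * pa (j+1))]

/-- upper step bound for pd -/
lemma K3 : ∀ n, 1 ≤ n → pd (n+1) < 64 * pd n ^ 3 := by
  intro n hn
  match n, hn with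
  | 1, _ =>
    have h1 : pd 2 = 134 := rfl
    have h2 : pd 1 = 2 := rfl
    rw [h1, h2]; norm_num
  | (k+2), _ =>
    have hM := keyM (k+1) (by omega)
    rw [pd_succ]
    have hT : 3 * pc (k+2) + pd (k+2) = Tn (k+2) := rfl
    rw [hT]
    have hAB : pa (k+2)^3 + pb (k+2)^3 < 2 * Sn (k+2)^3 := by
      have h := pa_lt_pb (k+2)
      have h1 : pa (k+2)^3 < pb (k+2)^3 := Nat.pow_lt_pow_left h (by norm_num)
      have h2 : pb (k+2) ≤ Sn (k+2) := Nat.le_add_left _ _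
      have h3 : pb (k+2)^3 ≤ Sn (k+2)^3 := Nat.pow_le_pow_left h2 3
      linarith
    have hE : pd (k+2) = pc (k+2) + Sn (k+1) * Rn (k+1)^2 := pd_eq_pc_add (k+1)
    have h4d : 4 * pd (k+2) = Tn (k+2) + 3 * (Sn (k+1) * Rn (k+1)^2) := by
      have : Tn (k+2) = 3 * pc (k+2) + pd (k+2) := rfl
      omega
    have hfin : Tn (k+2)^3 + 9 * (Sn (k+1) * Rn (k+1)^2) * Tn (k+2)^2
        ≤ 64 * pd (k+2)^3 := by
      calc Tn (k+2)^3 + 9 * (Sn (k+1) * Rn (k+1)^2) * Tn (k+2)^2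
          ≤ (Tn (k+2) + 3 * (Sn (k+1) * Rn (k+1)^2))^3 := by
            have expand : (Tn (k+2) + 3 * (Sn (k+1) * Rn (k+1)^2))^3
                = Tn (k+2)^3 + 9 * (Sn (k+1) * Rn (k+1)^2) * Tn (k+2)^2
                  + (27 * Tn (k+2) * (Sn (k+1) * Rn (k+1)^2)^2
                     + 27 * (Sn (k+1) * Rn (k+1)^2)^3) := by ring
            linarith [expand,
              Nat.zero_le (27 * Tn (k+2) * (Sn (k+1) * Rn (k+1)^2)^2
                     + 27 * (Sn (k+1) * Rn (k+1)^2)^3)]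
        _ = (4 * pd (k+2))^3 := by rw [h4d]
        _ = 64 * pd (k+2)^3 := by ring
    have hM' : 9 * Sn (k+1) * Rn (k+1)^2 * Tn (k+2)^2
        = 9 * (Sn (k+1) * Rn (k+1)^2) * Tn (k+2)^2 := by ring
    rw [hM'] at hM
    have i1 : Sn (k+1+1) = Sn (k+2) := rfl
    have i2 : Tn (k+1+1) = Tn (k+2) := rfl
    rw [i1, i2] at hM
    linarith

lemma exp_id (j : ℕ) : 3*(3^(j+1)-1) = 3*(3^j-1)*3 + 6 ∧ 3^(j+1) = 3^j*3 := by
  have h1 : (3:ℕ)^(j+1) = 3^j*3 := pow_succ 3 j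
  have h2 : 1 ≤ (3:ℕ)^j := Nat.one_le_pow _ _ (by norm_num)
  omega

lemma growthC (m : ℕ) (hm : 1 ≤ m) : ∀ k, 1 ≤ k →
    2^(3*(3^k-1)) * pc m ^ 3^k < pc (m+k) := by
  intro k hk
  induction k with
  | zero => omega
  | succ j ih =>
    rcases Nat.eq_zero_or_pos j with h0 | hj
    · subst h0
      have := K1 m hm
      norm_num
      convert this using 2
    · have hI := ih hj
      obtain ⟨he1, he2⟩ := exp_id j
      have hK := K1 (m+j) (by omega)
      have hC : 2^(3*(3^(j+1)-1)) * pc m ^ 3^(j+1)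
          = 64 * (2^(3*(3^j-1)) * pc m ^ 3^j)^3 := by
        rw [he1, he2, pow_add, pow_mul, pow_mul]; ring
      rw [show m+(j+1) = (m+j)+1 from rfl]
      calc 2^(3*(3^(j+1)-1)) * pc m ^ 3^(j+1)
          = 64 * (2^(3*(3^j-1)) * pc m ^ 3^j)^3 := hC
        _ < 64 * pc (m+j)^3 :=
            Nat.mul_lt_mul_of_le_of_lt le_rfl (Nat.pow_lt_pow_left hI (by norm_num)) (by norm_num)
        _ < pc (m+j+1) := hK

lemma growthD (m : ℕ) (hm : 1 ≤ m) : ∀ k, 1 ≤ k →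
    pd (m+k) < 2^(3*(3^k-1)) * pd m ^ 3^k := by
  intro k hk
  induction k with
  | zero => omega
  | succ j ih =>
    rcases Nat.eq_zero_or_pos j with h0 | hj
    · subst h0
      have := K3 m hm
      norm_num
      convert this using 2
    · have hI := ih hj
      obtain ⟨he1, he2⟩ := exp_id j
      have hK := K3 (m+j) (by omega)
      have hC : 2^(3*(3^(j+1)-1)) * pd m ^ 3^(j+1)
          = 64 * (2^(3*(3^j-1)) * pd m ^ 3^j)^3 := by
        rw [he1, he2, pow_add, pow_mul, pow_mul]; ring
      rw [show m+(j+1) = (m+j)+1 from rfl]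
      calc pd (m+j+1) < 64 * pd (m+j)^3 := hK
        _ ≤ 64 * (2^(3*(3^j-1)) * pd m ^ 3^j)^3 :=
            Nat.mul_le_mul le_rfl (Nat.pow_le_pow_left (le_of_lt hI) 3)
        _ = 2^(3*(3^(j+1)-1)) * pd m ^ 3^(j+1) := hC.symm

theorem stmt_10 (m n : ℕ) (hm : 1 ≤ m) (hmn : m < n) :
    (3 : ℝ) ^ (n - m) * Real.log (pc m) + 3 * ((3 : ℝ) ^ (n - m) - 1) * Real.log 2 <
        Real.log (pc n) ∧
    Real.log (pc n) < Real.log (pd n) ∧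
    Real.log (pd n) <
      (3 : ℝ) ^ (n - m) * Real.log (pd m) + 3 * ((3 : ℝ) ^ (n - m) - 1) * Real.log 2 := by
  set k := n - m with hkdef
  have hk1 : 1 ≤ k := by omega
  have hmk : m + k = n := by omega
  have hPC := growthC m hm k hk1
  have hPD := growthD m hm k hk1
  rw [hmk] at hPC hPD
  have hpcm : 1 ≤ pc m := by
    obtain ⟨i, hi⟩ : ∃ i, m = i+1 := ⟨m-1, by omega⟩
    rw [hi]; exact pc_pos i
  have hpdm : 1 ≤ pd m := pd_pos m
  have hpcn : 1 ≤ pc n := by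
    obtain ⟨i, hi⟩ : ∃ i, n = i+1 := ⟨n-1, by omega⟩
    rw [hi]; exact pc_pos i
  have hpdn : 1 ≤ pd n := pd_pos n
  have hcdn : pc n < pd n := by
    obtain ⟨i, hi⟩ : ∃ i, n = i+1 := ⟨n-1, by omega⟩
    rw [hi]; exact pc_lt_pd i
  have h3k : 1 ≤ (3:ℕ)^k := Nat.one_le_pow _ _ (by norm_num)
  have cE : ((3*(3^k-1) : ℕ) : ℝ) = 3 * ((3:ℝ)^k - 1) := by
    rw [Nat.cast_mul, Nat.cast_sub h3k]; push_cast; ring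
  have cP : ((3^k : ℕ) : ℝ) = (3:ℝ)^k := by push_cast; ring
  -- lower bound on log pc n
  have lA : Real.log ((2:ℝ)^(3*(3^k-1)) * (pc m : ℝ)^(3^k)) < Real.log (pc n) := by
    have hpos : (0:ℝ) < ((2^(3*(3^k-1)) * pc m ^ 3^k : ℕ) : ℝ) := by
      have : 0 < 2^(3*(3^k-1)) * pc m ^ 3^k :=
        Nat.mul_pos (Nat.pow_pos (by norm_num)) (Nat.pow_pos (by omega))
      exact_mod_cast this
    have h := Real.log_lt_log hpos (by exact_mod_cast hPC :
      ((2^(3*(3^k-1)) * pc m ^ 3^k : ℕ) : ℝ) < ((pc n : ℕ) : ℝ))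
    have cast_eq : ((2^(3*(3^k-1)) * pc m ^ 3^k : ℕ) : ℝ)
        = (2:ℝ)^(3*(3^k-1)) * (pc m : ℝ)^(3^k) := by push_cast; ring
    rwa [cast_eq] at h
  have lB : Real.log (pc n) < Real.log (pd n) :=
    Real.log_lt_log (by exact_mod_cast hpcn) (by exact_mod_cast hcdn)
  have lC : Real.log (pd n) < Real.log ((2:ℝ)^(3*(3^k-1)) * (pd m : ℝ)^(3^k)) := by
    have hpos : (0:ℝ) < ((pd n : ℕ) : ℝ) := by exact_mod_cast hpdn
    have h := Real.log_lt_log hpos (by exact_mod_cast hPD :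
      ((pd n : ℕ) : ℝ) < ((2^(3*(3^k-1)) * pd m ^ 3^k : ℕ) : ℝ))
    have cast_eq : ((2^(3*(3^k-1)) * pd m ^ 3^k : ℕ) : ℝ)
        = (2:ℝ)^(3*(3^k-1)) * (pd m : ℝ)^(3^k) := by push_cast; ring
    rwa [cast_eq] at h
  have expand1 : Real.log ((2:ℝ)^(3*(3^k-1)) * (pc m : ℝ)^(3^k))
      = (3*(3^k-1) : ℕ) * Real.log 2 + (3^k : ℕ) * Real.log (pc m) := by
    rw [Real.log_mul (by positivity) (by
        have : (0:ℝ) < (pc m : ℝ) := by exact_mod_cast hpcm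
        positivity), Real.log_pow, Real.log_pow]
  have expand2 : Real.log ((2:ℝ)^(3*(3^k-1)) * (pd m : ℝ)^(3^k))
      = (3*(3^k-1) : ℕ) * Real.log 2 + (3^k : ℕ) * Real.log (pd m) := by
    rw [Real.log_mul (by positivity) (by
        have : (0:ℝ) < (pd m : ℝ) := by exact_mod_cast hpdm
        positivity), Real.log_pow, Real.log_pow]
  rw [expand1, cE, cP] at lA
  rw [expand2, cE, cP] at lC
  exact ⟨by linarith, lB, by linarith⟩
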